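/- arXiv:2403.19145 — 7 statements merged into one kernel-verified Lean document; each statement's English description precedes it below -/
import Mathlib

section
/- Let Σ be a base of Δ. Then there exists a linear functional φ : V → ℝ such that φ(α) ≠ 0 for every α ∈ Δ and, for every α ∈ Δ, φ(α) > 0 if and only if α ∈ ℕΣ. In particular, Δ ∩ ℕΣ is a positive system of Δ. -/
open Pointwise

/-- `NComb S` is the set of all finite linear combinations of elements of `S`
with non-negative integer coefficients, i.e. the additive submonoid generated by `S`. -/
def NComb {V : Type*} [AddCommMonoid V] (S : Set V) : Set V :=
  (AddSubmonoid.closure S : Set V)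

/-- `B` is a base of `Δ`: `B ⊆ Δ`, `B` is linearly independent over `ℝ`, and
`Δ ⊆ ℕB ∪ (−ℕB)`. -/
def IsBase {V : Type*} [AddCommGroup V] [Module ℝ V] (Δ B : Set V) : Prop :=
  B ⊆ Δ ∧ LinearIndependent ℝ (fun x : B => (x : V)) ∧
    Δ ⊆ NComb B ∪ (-NComb B)

/-- For a base `B` of `Δ` there is a linear functional `φ` which is non-zero on all of `Δ`
and positive exactly on `Δ ∩ ℕB`; in particular `Δ ∩ ℕB` is a positive system. -/
theorem statement0 {V : Type*} [AddCommGroup V] [Module ℝ V]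
    (Δ B : Set V) (hfin : Δ.Finite) (h0 : (0 : V) ∉ Δ) (hB : IsBase Δ B) :
    ∃ φ : V →ₗ[ℝ] ℝ, ∀ α ∈ Δ, φ α ≠ 0 ∧ (0 < φ α ↔ α ∈ NComb B) := by
  obtain ⟨hBΔ, hli, hcov⟩ := hB
  have hBfin : B.Finite := hfin.subset hBΔ
  set bext := Module.Basis.extend hli with hbext
  have hsub : B ⊆ LinearIndepOn.extend (v := id) hli (Set.subset_univ B) := LinearIndepOn.subset_extend (v := id) hli _
  set φ : V →ₗ[ℝ] ℝ :=
    hBfin.toFinset.attach.sum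
      (fun b => bext.coord ⟨b.1, hsub (hBfin.mem_toFinset.mp b.2)⟩) with hφ
  have hone : ∀ b ∈ B, φ b = 1 := by
    intro b hb
    have hrepr : bext.repr b =
        Finsupp.single (⟨b, hsub hb⟩ : LinearIndepOn.extend (v := id) hli (Set.subset_univ B)) 1 := by
      have := bext.repr_self (⟨b, hsub hb⟩ : LinearIndepOn.extend (v := id) hli (Set.subset_univ B))
      rw [← this]
      congr 1
      rw [hbext]
      exact (Module.Basis.extend_apply_self hli ⟨b, hsub hb⟩).symm
    classical
    rw [hφ, LinearMap.coe_sum, Finset.sum_apply]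
    simp only [Module.Basis.coord_apply, hrepr]
    rw [Finset.sum_eq_single (⟨b, hBfin.mem_toFinset.mpr hb⟩ :
        {x // x ∈ hBfin.toFinset})]
    · simp
    · intro c _ hc
      rw [Finsupp.single_apply, if_neg]
      intro h
      exact hc (Subtype.ext (congrArg Subtype.val h).symm)
    · intro h
      exact absurd (Finset.mem_attach _ _) h
  have hnonneg : ∀ x ∈ NComb B, 0 ≤ φ x := by
    intro x hx
    induction hx using AddSubmonoid.closure_induction with
    | mem y hy => rw [hone y hy]; norm_num
    | zero => simp
    | add y z _ _ hy hz => rw [map_add]; linarith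
  have hzero : ∀ x ∈ NComb B, φ x = 0 → x = 0 := by
    intro x hx
    induction hx using AddSubmonoid.closure_induction with
    | mem y hy => intro h; rw [hone y hy] at h; norm_num at h
    | zero => intro _; rfl
    | add y z hy hz ihy ihz =>
      intro h
      rw [map_add] at h
      have h1 := hnonneg y hy
      have h2 := hnonneg z hz
      have hy0 : φ y = 0 := by linarith
      have hz0 : φ z = 0 := by linarith
      rw [ihy hy0, ihz hz0, add_zero]
  refine ⟨φ, fun α hα => ?_⟩
  rcases hcov hα with h | h
  · have hne : φ α ≠ 0 := fun hz => h0 (hzero α h hz ▸ hα)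
    have hpos : 0 < φ α := lt_of_le_of_ne (hnonneg α h) (Ne.symm hne)
    exact ⟨hne, ⟨fun _ => h, fun _ => hpos⟩⟩
  · have hmem : -α ∈ NComb B := by
      rwa [Set.mem_neg] at h
    have hne' : φ (-α) ≠ 0 := by
      intro hz
      apply h0
      have : -α = 0 := hzero _ hmem hz
      have : α = 0 := by simpa using congrArg Neg.neg this
      rwa [← this]
    have hpos' : 0 < φ (-α) := lt_of_le_of_ne (hnonneg _ hmem) (Ne.symm hne')
    rw [map_neg] at hpos' hne'
    constructor
    · intro hz; rw [hz] at hne'; simp at hne'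
    · constructor
      · intro hgt; linarith
      · intro hmem'
        have := hnonneg α hmem'
        linarith
end

section
/- Let Σ and Σ' be bases of Δ such that Δ ∩ ℕΣ = Δ ∩ ℕΣ'. Then Σ = Σ'. (That is, the correspondence sending a base Σ to the positive system Δ_Σ⁺ = Δ ∩ ℕΣ is injective.) -/
open Pointwise

lemma mem_NComb {V : Type*} [AddCommMonoid V] {S : Set V} {x : V} :
    x ∈ NComb S ↔ ∃ c : V →₀ ℕ, ↑c.support ⊆ S ∧
      Finsupp.linearCombination ℕ (id : V → V) c = x := by
  classical
  constructor
  · intro hx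
    induction hx using AddSubmonoid.closure_induction with
    | mem v hv =>
      refine ⟨Finsupp.single v 1, ?_, by simp⟩
      refine Set.Subset.trans (Finset.coe_subset.2 Finsupp.support_single_subset) (by simpa)
    | zero => exact ⟨0, by simp, by simp⟩
    | add a b _ _ iha ihb =>
      obtain ⟨c1, hc1, hc1'⟩ := iha
      obtain ⟨c2, hc2, hc2'⟩ := ihb
      refine ⟨c1 + c2, ?_, by rw [map_add, hc1', hc2']⟩
      refine Set.Subset.trans (Finset.coe_subset.2 Finsupp.support_add) ?_
      rw [Finset.coe_union]; exact Set.union_subset hc1 hc2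
  · rintro ⟨c, hc, rfl⟩
    rw [Finsupp.linearCombination_apply, Finsupp.sum]
    refine AddSubmonoid.sum_mem _ fun v hv => ?_
    exact nsmul_mem (AddSubmonoid.subset_closure (hc hv)) _

lemma NComb_unique {V : Type*} [AddCommGroup V] [Module ℝ V] {B : Set V}
    (hli : LinearIndependent ℝ (fun x : B => (x : V)))
    {c : V →₀ ℕ} (hc : ↑c.support ⊆ B) {b : V} (hb : b ∈ B)
    (heq : Finsupp.linearCombination ℕ (id : V → V) c = b) :
    c = Finsupp.single b 1 := by
  classical
  have h := linearIndepOn_iff.1 (linearIndependent_subtype_iff.1 hli)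
  set d : V →₀ ℝ := c.mapRange (Nat.cast) (by simp) with hd
  have hdtot : Finsupp.linearCombination ℝ (id : V → V) d = b := by
    rw [← heq]
    rw [Finsupp.linearCombination_apply, Finsupp.linearCombination_apply]
    rw [Finsupp.sum_mapRange_index (by simp)]
    rw [Finsupp.sum, Finsupp.sum]
    exact Finset.sum_congr rfl fun x _ => by simp [Nat.cast_smul_eq_nsmul]
  have key : d - Finsupp.single b (1 : ℝ) = 0 := by
    apply h
    · intro v hv
      rcases Finset.mem_union.1 (Finsupp.support_sub hv) with h1 | h1
      · exact hc (by simpa [hd] using h1)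
      · have := Finsupp.support_single_subset h1
        simp only [Finset.mem_singleton] at this
        simpa [this] using hb
    · rw [map_sub, hdtot, Finsupp.linearCombination_single]
      simp
  have hdeq : d = Finsupp.single b (1 : ℝ) := by
    have := sub_eq_zero.1 key; exact this
  ext j
  have := DFunLike.congr_fun hdeq j
  simp only [hd, Finsupp.mapRange_apply] at this
  by_cases hj : j = b
  · subst hj
    simp only [Finsupp.single_eq_same] at this ⊢
    exact_mod_cast this
  · simp only [Finsupp.single_eq_of_ne' (Ne.symm hj)] at this ⊢
    exact_mod_cast this

lemma base_subset_of_pos {V : Type*} [AddCommGroup V] [Module ℝ V] {B B' : Set V}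
    (hli : LinearIndependent ℝ (fun x : B => (x : V)))
    (hB' : B' ⊆ NComb B) : B ∩ NComb B' ⊆ B' := by
  rintro b ⟨hbB, hbN⟩
  obtain ⟨n, hn, hntot⟩ := mem_NComb.1 hbN
  -- each element of the support of n lies in NComb B
  choose m hm hmtot using fun v (hv : v ∈ n.support) => mem_NComb.1 (hB' (hn hv))
  classical
  set c : V →₀ ℕ := ∑ v ∈ n.support.attach, n v • m v v.2 with hc
  have hcsupp : ↑c.support ⊆ B := by
    refine Set.Subset.trans (Finset.coe_subset.2 Finsupp.support_finset_sum) ?_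
    rw [Finset.coe_biUnion]
    refine Set.iUnion₂_subset fun v _ => ?_
    refine Set.Subset.trans (Finset.coe_subset.2 (Finsupp.support_smul)) (hm v v.2)
  have hctot : Finsupp.linearCombination ℕ (id : V → V) c = b := by
    rw [hc, map_sum]
    rw [← hntot, Finsupp.linearCombination_apply, Finsupp.sum]
    simp only [id_eq]
    rw [← Finset.sum_attach n.support fun v => n v • v]
    exact Finset.sum_congr rfl fun v _ => by rw [map_nsmul, hmtot v v.2]
  have hcs := NComb_unique hli hcsupp hbB hctot
  -- coefficient of c at j
  have hcapp : ∀ j, c j = ∑ v ∈ n.support.attach, n v * m v v.2 j := by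
    intro j
    rw [hc, Finset.sum_apply']
    exact Finset.sum_congr rfl fun v _ => by simp [Finsupp.smul_apply]
  -- the coefficient at b is 1
  have h1 : ∑ v ∈ n.support.attach, n v * m v v.2 b = 1 := by
    rw [← hcapp, hcs, Finsupp.single_eq_same]
  -- find v0 with nonzero term
  have hex : ∃ v0 ∈ n.support.attach, n v0 * m v0 v0.2 b ≠ 0 := by
    by_contra hcon
    push_neg at hcon
    rw [Finset.sum_eq_zero hcon] at h1
    exact one_ne_zero h1.symm
  obtain ⟨v0, hv0mem, hv0⟩ := hex
  -- n v0 ≥ 1 since v0 ∈ support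
  have hnv0 : n (v0 : V) ≠ 0 := Finsupp.mem_support_iff.1 v0.2
  -- m v0 j = 0 for j ≠ b
  have hmj : ∀ j, j ≠ b → m v0 v0.2 j = 0 := by
    intro j hj
    have hcj : c j = 0 := by rw [hcs, Finsupp.single_eq_of_ne' (Ne.symm hj)]
    rw [hcapp] at hcj
    have := (Finset.sum_eq_zero_iff.1 hcj) v0 hv0mem
    exact (Nat.mul_eq_zero.1 this).resolve_left hnv0
  -- m v0 b = 1 : from term ≤ sum = 1 and ≠ 0
  have hterm : n (v0 : V) * m v0 v0.2 b = 1 := by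
    have hle : n (v0 : V) * m v0 v0.2 b ≤ 1 := h1 ▸ Finset.single_le_sum
      (f := fun (v : {x // x ∈ n.support}) => n v.1 * m v.1 v.2 b) (fun _ _ => Nat.zero_le _) hv0mem
    omega
  have hmb : m v0 v0.2 b = 1 := Nat.eq_one_of_mul_eq_one_left hterm
  -- hence m v0 = single b 1, so v0 = b
  have hmeq : m v0 v0.2 = Finsupp.single b 1 := by
    ext j
    by_cases hj : j = b
    · subst hj; simp [hmb]
    · simp [hmj j hj, Finsupp.single_eq_of_ne' (Ne.symm hj)]
  have : (v0 : V) = b := by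
    have := hmtot v0 v0.2
    rw [hmeq, Finsupp.linearCombination_single] at this
    simpa using this.symm
  exact this ▸ hn v0.2

/-- Two bases of `Δ` determining the same positive system coincide. -/
theorem statement2 {V : Type*} [AddCommGroup V] [Module ℝ V]
    (Δ B B' : Set V) (hfin : Δ.Finite) (h0 : (0 : V) ∉ Δ)
    (hB : IsBase Δ B) (hB' : IsBase Δ B')
    (h : Δ ∩ NComb B = Δ ∩ NComb B') : B = B' := by
  obtain ⟨hBΔ, hBli, -⟩ := hB
  obtain ⟨hB'Δ, hB'li, -⟩ := hB'
  have hBpos : B ⊆ Δ ∩ NComb B := fun b hb =>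
    ⟨hBΔ hb, AddSubmonoid.subset_closure hb⟩
  have hB'pos : B' ⊆ Δ ∩ NComb B' := fun b hb =>
    ⟨hB'Δ hb, AddSubmonoid.subset_closure hb⟩
  have hBN' : B ⊆ NComb B' := fun b hb => ((h ▸ hBpos hb) : b ∈ Δ ∩ NComb B').2
  have hB'N : B' ⊆ NComb B := fun b hb => ((h.symm ▸ hB'pos hb) : b ∈ Δ ∩ NComb B).2
  apply Set.Subset.antisymm
  · exact fun b hb => base_subset_of_pos hBli hB'N ⟨hb, hBN' hb⟩
  · exact fun b hb => base_subset_of_pos hB'li hBN' ⟨hb, hB'N hb⟩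
end

section
/- Let Σ and Σ' be bases of Δ such that every element of Σ is a non-negative integer combination of elements of Σ' (i.e., Σ ⊆ ℕΣ'). Then Σ = Σ'. -/
open Pointwise

namespace Statement3Aux

theorem mem_NComb {V : Type*} [AddCommMonoid V] {S : Set V} {x : V} :
    x ∈ NComb S ↔ ∃ f : V →₀ ℕ, ↑f.support ⊆ S ∧ f.sum (fun v n => n • v) = x := by
  classical
  constructor
  · intro hx
    induction hx using AddSubmonoid.closure_induction with
    | mem y hy =>
      refine ⟨Finsupp.single y 1, ?_, by simp⟩
      refine Set.Subset.trans ?_ (Set.singleton_subset_iff.mpr hy)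
      intro z hz
      have := Finsupp.support_single_subset (Finset.mem_coe.mp hz)
      simpa using this
    | zero => exact ⟨0, by simp, by simp⟩
    | add x y hx hy ihx ihy =>
      obtain ⟨f, hf, hfx⟩ := ihx
      obtain ⟨g, hg, hgy⟩ := ihy
      refine ⟨f + g, ?_, ?_⟩
      · intro z hz
        have := Finsupp.support_add (Finset.mem_coe.mp hz)
        rcases Finset.mem_union.mp this with h' | h'
        · exact hf (Finset.mem_coe.mpr h')
        · exact hg (Finset.mem_coe.mpr h')
      · rw [Finsupp.sum_add_index' (fun v => zero_nsmul v) (fun v a b => add_nsmul v a b),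
          hfx, hgy]
  · rintro ⟨f, hf, rfl⟩
    rw [Finsupp.sum]
    apply AddSubmonoid.sum_mem
    intro v hv
    exact nsmul_mem (AddSubmonoid.subset_closure (hf (Finset.mem_coe.mpr hv))) _

theorem unique_rep {V : Type*} [AddCommGroup V] [Module ℝ V] {B : Set V}
    (hli : LinearIndependent ℝ (fun x : B => (x : V)))
    {f g : V →₀ ℕ} (hf : ↑f.support ⊆ B) (hg : ↑g.support ⊆ B)
    (hfg : f.sum (fun v n => n • v) = g.sum (fun v n => n • v)) : f = g := by
  have key : ∀ p : V →₀ ℕ, Finsupp.linearCombination ℝ (id : V → V)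
      (p.mapRange (Nat.cast : ℕ → ℝ) Nat.cast_zero) = p.sum (fun v n => n • v) := by
    intro p
    rw [Finsupp.linearCombination_apply, Finsupp.sum_mapRange_index (by simp)]
    exact Finsupp.sum_congr (fun v _ => by
      simp only [id_eq]
      exact Nat.cast_smul_eq_nsmul ℝ _ _)
  set F := f.mapRange (Nat.cast : ℕ → ℝ) Nat.cast_zero with hF
  set G := g.mapRange (Nat.cast : ℕ → ℝ) Nat.cast_zero with hG
  have hFmem : F ∈ Finsupp.supported ℝ ℝ B := by
    rw [Finsupp.mem_supported]
    exact Set.Subset.trans (by exact_mod_cast Finsupp.support_mapRange) hf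
  have hGmem : G ∈ Finsupp.supported ℝ ℝ B := by
    rw [Finsupp.mem_supported]
    exact Set.Subset.trans (by exact_mod_cast Finsupp.support_mapRange) hg
  have hFG : F - G = 0 := by
    apply (linearIndepOn_iff (v := id)).mp hli
    · exact Submodule.sub_mem _ hFmem hGmem
    · rw [map_sub, key f, key g, hfg, sub_self]
  have hFG' : F = G := by rwa [sub_eq_zero] at hFG
  ext a
  have : F a = G a := by rw [hFG']
  simpa [hF, hG, Finsupp.mapRange_apply] using this

theorem subset_aux {V : Type*} [AddCommGroup V] [Module ℝ V] {B B' : Set V}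
    (hli : LinearIndependent ℝ (fun x : B => (x : V)))
    (h0' : (0 : V) ∉ B')
    (h1 : B ⊆ NComb B') (h2 : B' ⊆ NComb B) : B ⊆ B' := by
  classical
  intro b hb
  obtain ⟨f, hfsupp, hfsum⟩ := mem_NComb.mp (h1 hb)
  have hgex : ∀ v : V, ∃ g : V →₀ ℕ, v ∈ B' →
      (↑g.support ⊆ B ∧ g.sum (fun v n => n • v) = v) := by
    intro v
    by_cases hv : v ∈ B'
    · obtain ⟨g, h1g, h2g⟩ := mem_NComb.mp (h2 hv)
      exact ⟨g, fun _ => ⟨h1g, h2g⟩⟩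
    · exact ⟨0, fun hv' => absurd hv' hv⟩
  choose g hg using hgex
  set h : V →₀ ℕ := f.sum (fun v n => n • g v) with hh
  have hmemf : ∀ v ∈ f.support, v ∈ B' := fun v hv => hfsupp (Finset.mem_coe.mpr hv)
  have hhsupp : ↑h.support ⊆ B := by
    intro z hz
    have hz' := Finsupp.support_sum (Finset.mem_coe.mp hz)
    obtain ⟨v, hv, hzv⟩ := Finset.mem_biUnion.mp hz'
    have : z ∈ (g v).support := Finsupp.support_smul hzv
    exact (hg v (hmemf v hv)).1 (Finset.mem_coe.mpr this)
  have hterm : ∀ v ∈ f.support, ∀ n : ℕ,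
      (n • g v).sum (fun a m => m • a) = n • v := by
    intro v hv n
    rw [Finsupp.sum_smul_index (fun i => zero_nsmul i)]
    have : ((g v).sum fun i c => (n * c) • i) = n • (g v).sum fun i c => c • i := by
      rw [Finsupp.smul_sum]
      exact Finsupp.sum_congr (fun i _ => mul_smul n _ i)
    rw [this, (hg v (hmemf v hv)).2]
  have hhsum : h.sum (fun v n => n • v) = b := by
    rw [hh, Finsupp.sum_sum_index (fun a => zero_nsmul a) (fun a b₁ b₂ => add_nsmul a b₁ b₂)]
    rw [← hfsum]
    exact Finsupp.sum_congr (fun v hv => hterm v hv (f v))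
  have hsingle : ↑(Finsupp.single b 1).support ⊆ B := by
    intro z hz
    have := Finsupp.support_single_subset (Finset.mem_coe.mp hz)
    simp only [Finset.mem_singleton] at this
    subst this; exact hb
  have heq : h = Finsupp.single b 1 :=
    unique_rep hli hhsupp hsingle (by rw [hhsum]; simp)
  -- mass argument
  have hmass : (f.sum fun v n => n * (g v).sum fun _ m => m) = 1 := by
    have := congrArg (fun p : V →₀ ℕ => p.sum fun _ n => n) heq
    rw [hh, Finsupp.sum_sum_index (fun a => rfl) (fun a b₁ b₂ => rfl)] at this
    rw [Finsupp.sum_single_index rfl] at this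
    rw [← this]
    apply Finsupp.sum_congr
    intro v hv
    rw [Finsupp.sum_smul_index (fun i => rfl)]
    simp only [Finsupp.sum, Finset.mul_sum]
  have hne : f.support.Nonempty := by
    rcases Finset.eq_empty_or_nonempty f.support with he | hne
    · exfalso
      rw [Finsupp.sum, he, Finset.sum_empty] at hmass
      exact one_ne_zero hmass.symm
    · exact hne
  have hge : ∀ v ∈ f.support, 1 ≤ f v * (g v).sum fun _ m => m := by
    intro v hv
    have hfv : 1 ≤ f v := Nat.one_le_iff_ne_zero.mpr (Finsupp.mem_support_iff.mp hv)
    have hMg : 1 ≤ (g v).sum fun _ m => m := by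
      rw [Nat.one_le_iff_ne_zero]
      intro hM0
      have hg0 : g v = 0 := by
        ext a
        by_cases ha : a ∈ (g v).support
        · rw [Finsupp.sum] at hM0
          have := (Finset.sum_eq_zero_iff.mp hM0) a ha
          simpa using this
        · simpa using Finsupp.notMem_support_iff.mp ha
      have hv0 : (0 : V) = v := by
        have := (hg v (hmemf v hv)).2
        rw [hg0] at this
        simpa using this
      exact h0' (hv0 ▸ hmemf v hv)
    calc (1 : ℕ) = 1 * 1 := rfl
      _ ≤ f v * ((g v).sum fun _ m => m) := Nat.mul_le_mul hfv hMg
  have hcard : f.support.card = 1 := by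
    have hle : f.support.card ≤ 1 := by
      calc f.support.card = ∑ _v ∈ f.support, 1 := by simp
        _ ≤ ∑ v ∈ f.support, f v * ((g v).sum fun _ m => m) := Finset.sum_le_sum hge
        _ = 1 := hmass
    exact le_antisymm hle (Finset.card_pos.mpr hne)
  obtain ⟨v₀, hv₀⟩ := Finset.card_eq_one.mp hcard
  have hv₀mem : v₀ ∈ f.support := by rw [hv₀]; exact Finset.mem_singleton_self v₀
  have hsum1 : f v₀ * ((g v₀).sum fun _ m => m) = 1 := by
    rw [Finsupp.sum, hv₀, Finset.sum_singleton] at hmass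
    exact hmass
  have hfv₀ : f v₀ = 1 := Nat.eq_one_of_mul_eq_one_right hsum1
  have hbv : b = v₀ := by
    rw [← hfsum, Finsupp.sum, hv₀, Finset.sum_singleton, hfv₀, one_smul]
  rw [hbv]
  exact hmemf v₀ hv₀mem

end Statement3Aux

/-- If every element of the base `B` is a non-negative integer combination of
elements of the base `B'`, then `B = B'`. -/
theorem statement3 {V : Type*} [AddCommGroup V] [Module ℝ V]
    (Δ B B' : Set V) (hfin : Δ.Finite) (h0 : (0 : V) ∉ Δ)
    (hB : IsBase Δ B) (hB' : IsBase Δ B')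
    (h : B ⊆ NComb B') : B = B' := by
  classical
  obtain ⟨hBΔ, hBli, hBcov⟩ := hB
  obtain ⟨hB'Δ, hB'li, hB'cov⟩ := hB'
  have h0B : (0 : V) ∉ B := fun hx => h0 (hBΔ hx)
  have h0B' : (0 : V) ∉ B' := fun hx => h0 (hB'Δ hx)
  have hsub : NComb B ⊆ NComb B' := fun x hx => AddSubmonoid.closure_le.mpr h hx
  have h2 : B' ⊆ NComb B := by
    intro b' hb'
    rcases hBcov (hB'Δ hb') with hmem | hmem
    · exact hmem
    · exfalso
      have hneg : -b' ∈ NComb B' := hsub (Set.mem_neg.mp hmem)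
      obtain ⟨fneg, hfs, hfsum⟩ := Statement3Aux.mem_NComb.mp hneg
      have hsing : ↑(Finsupp.single b' 1 : V →₀ ℕ).support ⊆ B' := by
        intro z hz
        have := Finsupp.support_single_subset (Finset.mem_coe.mp hz)
        simp only [Finset.mem_singleton] at this
        subst this; exact hb'
      have hsupp : ↑(fneg + Finsupp.single b' 1).support ⊆ B' := by
        intro z hz
        have := Finsupp.support_add (Finset.mem_coe.mp hz)
        rcases Finset.mem_union.mp this with h' | h'
        · exact hfs (Finset.mem_coe.mpr h')
        · exact hsing (Finset.mem_coe.mpr h')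
      have hzero : fneg + Finsupp.single b' 1 = 0 := by
        apply Statement3Aux.unique_rep hB'li hsupp (by simp)
        rw [Finsupp.sum_add_index' (fun v => zero_nsmul v) (fun v a b => add_nsmul v a b),
          hfsum]
        simp
      have := congrArg (fun p : V →₀ ℕ => p b') hzero
      simp at this
  have hd1 : B ⊆ B' := Statement3Aux.subset_aux hBli h0B' h h2
  have hd2 : B' ⊆ B := Statement3Aux.subset_aux hB'li h0B h2 h
  exact Set.Subset.antisymm hd1 hd2
end

section
/- Let Σ and Σ' be bases of Δ with Σ ≠ Σ'. Then there exists α ∈ Σ with α ∈ −ℕΣ'; that is, some simple root of Σ is a negative root for Σ'. -/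
open Pointwise

set_option linter.unusedSectionVars false
section Aux
variable {V : Type*} [AddCommGroup V] [Module ℝ V]

lemma mem_NComb_iff {S : Set V} {x : V} :
    x ∈ NComb S ↔ ∃ f : V →₀ ℕ, ↑f.support ⊆ S ∧ (f.sum fun v n => n • v) = x := by
  have h1 : x ∈ NComb S ↔ x ∈ Submodule.span ℕ S := by
    rw [NComb, ← Submodule.span_nat_eq_addSubmonoidClosure]; rfl
  rw [h1, Submodule.mem_span_set]

lemma sum_eq_unique {B : Set V} (hli : LinearIndependent ℝ (fun x : B => (x : V)))
    {f g : V →₀ ℕ} (hf : ↑f.support ⊆ B) (hg : ↑g.support ⊆ B)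
    (h : (f.sum fun v n => n • v) = g.sum fun v n => n • v) : f = g := by
  classical
  have key := linearIndepOn_iff.mp (linearIndependent_subtype_iff.mp hli)
  set F : V →₀ ℝ := f.mapRange Nat.cast Nat.cast_zero with hF
  set G : V →₀ ℝ := g.mapRange Nat.cast Nat.cast_zero with hG
  have hFs : (F.sum fun v r => r • v) = f.sum fun v n => n • v := by
    rw [hF, Finsupp.sum_mapRange_index (by simp)]
    exact Finsupp.sum_congr fun v _ => Nat.cast_smul_eq_nsmul ℝ _ _
  have hGs : (G.sum fun v r => r • v) = g.sum fun v n => n • v := by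
    rw [hG, Finsupp.sum_mapRange_index (by simp)]
    exact Finsupp.sum_congr fun v _ => Nat.cast_smul_eq_nsmul ℝ _ _
  have hmem : F - G ∈ Finsupp.supported ℝ ℝ B := by
    rw [Finsupp.mem_supported]
    intro v hv
    have hv' : v ∈ F.support ∪ G.support := Finsupp.support_sub (Finset.mem_coe.mp hv)
    rcases Finset.mem_union.mp hv' with hv | hv
    · exact hf (Finsupp.support_mapRange hv)
    · exact hg (Finsupp.support_mapRange hv)
  have hzero : Finsupp.linearCombination ℝ id (F - G) = 0 := by
    rw [map_sub]
    simp only [Finsupp.linearCombination_apply, id]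
    rw [hFs, hGs, h, sub_self]
  have hFG : F = G := sub_eq_zero.mp (key _ hmem hzero)
  ext v
  have := DFunLike.congr_fun hFG v
  simp only [hF, hG, Finsupp.mapRange_apply] at this
  exact_mod_cast this

lemma base_eq_irr {B : Set V} (hli : LinearIndependent ℝ (fun x : B => (x : V)))
    (h0 : (0 : V) ∉ B) :
    B = {x | x ∈ NComb B ∧ x ≠ 0 ∧
      ∀ y ∈ NComb B, ∀ z ∈ NComb B, x = y + z → y = 0 ∨ z = 0} := by
  classical
  ext x
  constructor
  · intro hx
    refine ⟨AddSubmonoid.subset_closure hx, fun h => h0 (h ▸ hx), ?_⟩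
    rintro y hy z hz hxyz
    obtain ⟨f, hf, hfs⟩ := mem_NComb_iff.mp hy
    obtain ⟨g, hg, hgs⟩ := mem_NComb_iff.mp hz
    have hsingle : ((Finsupp.single x 1 : V →₀ ℕ).sum fun v n => n • v) = x := by simp
    have hfg : ((f + g).sum fun v n => n • v) = x := by
      rw [Finsupp.sum_add_index' (fun a => zero_smul ℕ a) (fun a b c => add_smul b c a),
        hfs, hgs]
      exact hxyz.symm
    have hsuppfg : ↑(f + g).support ⊆ B := by
      refine (Finset.coe_subset.mpr Finsupp.support_add).trans ?_
      rw [Finset.coe_union]; exact Set.union_subset hf hg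
    have hsupps : ↑(Finsupp.single x (1:ℕ)).support ⊆ B := by
      refine (Finset.coe_subset.mpr Finsupp.support_single_subset).trans ?_
      simpa using hx
    have heq : f + g = Finsupp.single x 1 :=
      sum_eq_unique hli hsuppfg hsupps (hfg.trans hsingle.symm)
    have hzer : ∀ v, v ≠ x → f v = 0 ∧ g v = 0 := by
      intro v hv
      have := DFunLike.congr_fun heq v
      rw [Finsupp.add_apply, Finsupp.single_eq_of_ne' (Ne.symm hv)] at this
      omega
    have hx1 : f x + g x = 1 := by
      have := DFunLike.congr_fun heq x
      simpa using this
    rcases Nat.eq_zero_or_pos (f x) with hfx | hfx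
    · left
      rw [← hfs]
      have : f = 0 := by
        ext v
        rcases eq_or_ne v x with rfl | hv
        · simpa using hfx
        · simpa using (hzer v hv).1
      rw [this]; simp
    · right
      rw [← hgs]
      have : g = 0 := by
        ext v
        simp only [Finsupp.coe_zero, Pi.zero_apply]
        rcases eq_or_ne v x with rfl | hv
        · omega
        · exact (hzer v hv).2
      rw [this]; simp
  · rintro ⟨hxM, hx0, hirr⟩
    obtain ⟨f, hf, hfs⟩ := mem_NComb_iff.mp hxM
    have hfne : f ≠ 0 := by
      rintro rfl
      simp at hfs
      exact hx0 hfs.symm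
    obtain ⟨α, hα⟩ := Finsupp.support_nonempty_iff.mpr hfne
    have hαB : α ∈ B := hf hα
    have hα1 : 1 ≤ f α := Nat.one_le_iff_ne_zero.mpr (Finsupp.mem_support_iff.mp hα)
    set g : V →₀ ℕ := f - Finsupp.single α 1 with hgdef
    have hsplit : f = Finsupp.single α 1 + g := by
      ext v
      rw [Finsupp.add_apply, hgdef, Finsupp.tsub_apply]
      rcases eq_or_ne v α with rfl | hv
      · simp; omega
      · rw [Finsupp.single_eq_of_ne' (Ne.symm hv)]; omega
    have hgsupp : ↑g.support ⊆ B := by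
      refine Set.Subset.trans ?_ hf
      intro v hv
      simp only [Finset.mem_coe, Finsupp.mem_support_iff] at hv ⊢
      intro h
      apply hv
      rw [hgdef, Finsupp.tsub_apply, h]
      simp
    have hxeq : x = α + (g.sum fun v n => n • v) := by
      rw [← hfs, hsplit,
        Finsupp.sum_add_index' (fun a => zero_smul ℕ a) (fun a b c => add_smul b c a)]
      simp
    have hgmem : (g.sum fun v n => n • v) ∈ NComb B :=
      mem_NComb_iff.mpr ⟨g, hgsupp, rfl⟩
    rcases hirr α (AddSubmonoid.subset_closure hαB) _ hgmem hxeq with h | h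
    · exact absurd hαB (h ▸ h0)
    · rw [hxeq, h, add_zero]; exact hαB

end Aux

/-- If `B ≠ B'` are bases of `Δ`, some element of `B` is a negative root for `B'`. -/
theorem statement4 {V : Type*} [AddCommGroup V] [Module ℝ V]
    (Δ B B' : Set V) (hfin : Δ.Finite) (h0 : (0 : V) ∉ Δ)
    (hB : IsBase Δ B) (hB' : IsBase Δ B')
    (hne : B ≠ B') : ∃ α ∈ B, α ∈ -NComb B' := by
  classical
  by_contra hcon
  push_neg at hcon
  obtain ⟨hBΔ, hBli, hBpm⟩ := hB
  obtain ⟨hB'Δ, hB'li, hB'pm⟩ := hB'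
  have hBsub : B ⊆ NComb B' := by
    intro α hα
    rcases hB'pm (hBΔ hα) with h | h
    · exact h
    · exact absurd h (hcon α hα)
  have hle : AddSubmonoid.closure B ≤ AddSubmonoid.closure B' :=
    AddSubmonoid.closure_le.mpr hBsub
  have hA : ∀ β ∈ B', β ∉ -NComb B' := by
    intro β hβ hneg
    rw [Set.mem_neg] at hneg
    obtain ⟨f, hf, hfs⟩ := mem_NComb_iff.mp hneg
    have hsum0 : ((f + Finsupp.single β 1).sum fun v n => n • v)
        = ((0 : V →₀ ℕ).sum fun v n => n • v) := by
      rw [Finsupp.sum_add_index' (fun a => zero_smul ℕ a) (fun a b c => add_smul b c a), hfs]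
      simp
    have hsupp : ↑(f + Finsupp.single β 1).support ⊆ B' := by
      intro v hv
      have hv' := Finsupp.support_add (Finset.mem_coe.mp hv)
      rcases Finset.mem_union.mp hv' with hv | hv
      · exact hf hv
      · rw [Finset.mem_singleton.mp (Finsupp.support_single_subset hv)]
        exact hβ
    have heq := sum_eq_unique hB'li hsupp (by simp) hsum0
    have := DFunLike.congr_fun heq β
    simp [Finsupp.add_apply] at this
  have hB'sub : B' ⊆ NComb B := by
    intro β hβ
    rcases hBpm (hB'Δ hβ) with h | h
    · exact h
    · exact absurd (Set.neg_subset_neg.mpr (fun x hx => hle hx) h) (hA β hβ)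
  have hle' : AddSubmonoid.closure B' ≤ AddSubmonoid.closure B :=
    AddSubmonoid.closure_le.mpr hB'sub
  have hNC : NComb B = NComb B' :=
    congrArg SetLike.coe (le_antisymm hle hle')
  have h0B : (0 : V) ∉ B := fun h => h0 (hBΔ h)
  have h0B' : (0 : V) ∉ B' := fun h => h0 (hB'Δ h)
  apply hne
  rw [base_eq_irr hBli h0B, base_eq_irr hB'li h0B', hNC]
end

section
/- Assume Δ = −Δ. Let Σ be a base of Δ and let α ∈ Σ be such that the only real scalar multiples of α lying in Δ are α and −α. Then there exists a linear functional φ : V → ℝ with φ(β) ≠ 0 for all β ∈ Δ and {β ∈ Δ : φ(β) > 0} = ((Δ ∩ ℕΣ) \ {α}) ∪ {−α}. In particular, ((Δ ∩ ℕΣ) \ {α}) ∪ {−α} is a positive system of Δ. -/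
open Pointwise

/-- Reflecting a base in a simple root `α` whose only multiples in `Δ` are `±α`
produces a positive system. -/
theorem statement5 {V : Type*} [AddCommGroup V] [Module ℝ V]
    (Δ B : Set V) (hfin : Δ.Finite) (h0 : (0 : V) ∉ Δ)
    (hsym : Δ = -Δ) (hB : IsBase Δ B) (α : V) (hα : α ∈ B)
    (hmult : ∀ c : ℝ, c • α ∈ Δ → c • α = α ∨ c • α = -α) :
    ∃ φ : V →ₗ[ℝ] ℝ, (∀ β ∈ Δ, φ β ≠ 0) ∧
      {β ∈ Δ | 0 < φ β} = ((Δ ∩ NComb B) \ {α}) ∪ {-α} := by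
  classical
  obtain ⟨hBΔ, hli, hspan⟩ := hB
  have hli : LinearIndepOn ℝ id B := hli
  have hα0 : α ≠ 0 := fun h => h0 (h ▸ hBΔ hα)
  have hBsub : B ⊆ hli.extend (Set.subset_univ B) := hli.subset_extend _
  set bE := Module.Basis.extend hli with hbE
  set φ₀ : V →ₗ[ℝ] ℝ :=
    bE.constr ℝ (fun i => if (i : V) = α then (0 : ℝ) else 1) with hφ₀def
  set φ₁ : V →ₗ[ℝ] ℝ :=
    bE.constr ℝ (fun i => if (i : V) = α then (1 : ℝ) else 0) with hφ₁def
  have hφ₀b : ∀ b ∈ B, φ₀ b = if b = α then (0 : ℝ) else 1 := by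
    intro b hb
    have hco : b = bE ⟨b, hBsub hb⟩ := (Module.Basis.extend_apply_self hli ⟨b, hBsub hb⟩).symm
    conv_lhs => rw [hco]
    rw [hφ₀def, Module.Basis.constr_basis]
  have hφ₁b : ∀ b ∈ B, φ₁ b = if b = α then (1 : ℝ) else 0 := by
    intro b hb
    have hco : b = bE ⟨b, hBsub hb⟩ := (Module.Basis.extend_apply_self hli ⟨b, hBsub hb⟩).symm
    conv_lhs => rw [hco]
    rw [hφ₁def, Module.Basis.constr_basis]
  have hφ₀α : φ₀ α = 0 := by rw [hφ₀b α hα]; simp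
  have hφ₁α : φ₁ α = 1 := by rw [hφ₁b α hα]; simp
  -- structural lemma on NComb B
  have key : ∀ x ∈ NComb B, 0 ≤ φ₀ x ∧ (φ₀ x = 0 → ∃ n : ℕ, x = n • α) := by
    intro x hx
    induction hx using AddSubmonoid.closure_induction with
    | mem b hb =>
      by_cases hbα : b = α
      · subst hbα
        exact ⟨le_of_eq hφ₀α.symm, fun _ => ⟨1, (one_smul ℕ b).symm⟩⟩
      · have : φ₀ b = 1 := by rw [hφ₀b b hb, if_neg hbα]
        exact ⟨by rw [this]; norm_num, fun h => absurd (this ▸ h) one_ne_zero⟩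
    | zero => exact ⟨le_of_eq (map_zero φ₀).symm, fun _ => ⟨0, by simp⟩⟩
    | add x y hx hy ihx ihy =>
      refine ⟨by rw [map_add]; exact add_nonneg ihx.1 ihy.1, fun h => ?_⟩
      rw [map_add] at h
      have hx0 : φ₀ x = 0 := le_antisymm (by linarith [ihy.1]) ihx.1
      have hy0 : φ₀ y = 0 := le_antisymm (by linarith [ihx.1]) ihy.1
      obtain ⟨n, hn⟩ := ihx.2 hx0
      obtain ⟨m, hm⟩ := ihy.2 hy0
      exact ⟨n + m, by rw [hn, hm, add_smul]⟩
  -- positivity of φ₀ on Δ ∩ NComb B away from α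
  have hpos : ∀ β ∈ Δ, β ∈ NComb B → β ≠ α → 0 < φ₀ β := by
    intro β hβΔ hβN hβα
    rcases lt_or_eq_of_le (key β hβN).1 with h | h
    · exact h
    obtain ⟨n, hn⟩ := (key β hβN).2 h.symm
    have hns : β = (n : ℝ) • α := by rw [hn, Nat.cast_smul_eq_nsmul]
    rcases hmult (n : ℝ) (hns ▸ hβΔ) with hc | hc
    · exact absurd (hns.trans hc) hβα
    · exfalso
      have : ((n : ℝ) + 1) • α = 0 := by
        rw [add_smul, one_smul, hc]; abel
      have hn1 : ((n : ℝ) + 1) ≠ 0 := by positivity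
      exact hα0 (by simpa [hn1] using smul_eq_zero.mp this)
  -- choose ε
  set g : V → ℝ := fun β => φ₀ β / (1 + |φ₁ β|) with hg
  set F : Finset V := hfin.toFinset.filter (fun β => β ∈ NComb B ∧ β ≠ α) with hF
  have hgpos : ∀ β ∈ F, 0 < g β := by
    intro β hβ
    rw [hF, Finset.mem_filter, Set.Finite.mem_toFinset] at hβ
    exact div_pos (hpos β hβ.1 hβ.2.1 hβ.2.2) (by positivity)
  obtain ⟨ε, hε, hεle⟩ : ∃ ε : ℝ, 0 < ε ∧ ∀ β ∈ F, ε ≤ g β := by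
    rcases F.eq_empty_or_nonempty with h | h
    · exact ⟨1, one_pos, by simp [h]⟩
    · refine ⟨F.inf' h g, ?_, fun β hβ => Finset.inf'_le g hβ⟩
      obtain ⟨β, hβ, hβe⟩ := Finset.exists_mem_eq_inf' h g
      rw [hβe]; exact hgpos β hβ
  set φ : V →ₗ[ℝ] ℝ := φ₀ - ε • φ₁ with hφdef
  have hφα : φ α = -ε := by simp [hφdef, hφ₀α, hφ₁α]
  have hφposS : ∀ β ∈ Δ, β ∈ NComb B → β ≠ α → 0 < φ β := by
    intro β hβΔ hβN hβα
    have hβF : β ∈ F := by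
      rw [hF, Finset.mem_filter, Set.Finite.mem_toFinset]; exact ⟨hβΔ, hβN, hβα⟩
    have h1 : ε * |φ₁ β| ≤ g β * |φ₁ β| :=
      mul_le_mul_of_nonneg_right (hεle β hβF) (abs_nonneg _)
    have hp0 : 0 < φ₀ β := hpos β hβΔ hβN hβα
    have h2 : g β * |φ₁ β| < φ₀ β := by
      rw [hg]
      rw [div_mul_eq_mul_div, div_lt_iff₀ (by positivity)]
      have : |φ₁ β| < 1 + |φ₁ β| := by linarith
      calc φ₀ β * |φ₁ β| < φ₀ β * (1 + |φ₁ β|) := by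
            exact mul_lt_mul_of_pos_left this hp0
        _ = φ₀ β * (1 + |φ₁ β|) := rfl
    have h3 : ε * φ₁ β ≤ ε * |φ₁ β| :=
      mul_le_mul_of_nonneg_left (le_abs_self _) hε.le
    have : φ β = φ₀ β - ε * φ₁ β := by simp [hφdef]
    rw [this]
    linarith
  have hnegα : -α ∈ Δ := by
    rw [hsym]; simpa using hBΔ hα
  -- main dichotomy for β ∈ Δ
  have hdich : ∀ β ∈ Δ, (β ∈ NComb B ∧ β ≠ α ∧ 0 < φ β) ∨ (β = α ∧ φ β < 0) ∨
      (β = -α ∧ 0 < φ β) ∨ ((-β) ∈ NComb B ∧ (-β) ≠ α ∧ φ β < 0) := by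
    intro β hβΔ
    rcases hspan hβΔ with hβN | hβN
    · by_cases hβα : β = α
      · exact Or.inr (Or.inl ⟨hβα, by rw [hβα, hφα]; linarith⟩)
      · exact Or.inl ⟨hβN, hβα, hφposS β hβΔ hβN hβα⟩
    · have hmβ : -β ∈ NComb B := by rwa [Set.mem_neg] at hβN
      have hmβΔ : -β ∈ Δ := by rw [hsym]; simpa using hβΔ
      by_cases hmα : -β = α
      · have : β = -α := by rw [← hmα]; abel
        refine Or.inr (Or.inr (Or.inl ⟨this, ?_⟩))
        rw [this, map_neg, hφα]; linarith
      · refine Or.inr (Or.inr (Or.inr ⟨hmβ, hmα, ?_⟩))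
        have := hφposS (-β) hmβΔ hmβ hmα
        rw [map_neg] at this; linarith
  refine ⟨φ, ?_, ?_⟩
  · intro β hβΔ
    rcases hdich β hβΔ with ⟨_, _, h⟩ | ⟨_, h⟩ | ⟨_, h⟩ | ⟨_, _, h⟩ <;>
      first | exact ne_of_gt h | exact ne_of_lt h
  · ext β
    simp only [Set.mem_setOf_eq, Set.mem_union, Set.mem_diff, Set.mem_inter_iff,
      Set.mem_singleton_iff]
    constructor
    · rintro ⟨hβΔ, hβpos⟩
      rcases hdich β hβΔ with ⟨hN, hne, _⟩ | ⟨_, h⟩ | ⟨h, _⟩ | ⟨_, _, h⟩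
      · exact Or.inl ⟨⟨hβΔ, hN⟩, hne⟩
      · linarith
      · exact Or.inr h
      · linarith
    · rintro (⟨⟨hβΔ, hN⟩, hne⟩ | h)
      · exact ⟨hβΔ, hφposS β hβΔ hN hne⟩
      · subst h
        refine ⟨hnegα, ?_⟩
        rw [map_neg, hφα]; linarith
end

section
/- Assume Δ = −Δ. Let Σ and Σ' be bases of Δ and let α ∈ Σ satisfy α ∈ −ℕΣ'. Then the finite set (((Δ ∩ ℕΣ) \ {α}) ∪ {−α}) ∩ (−ℕΣ') has cardinality exactly one less than the cardinality of (Δ ∩ ℕΣ) ∩ (−ℕΣ'). -/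
open Pointwise

lemma mem_NComb_exists {V : Type*} [AddCommMonoid V] {S : Set V} {x : V}
    (hx : x ∈ NComb S) :
    ∃ f : V →₀ ℕ, ↑f.support ⊆ S ∧ f.sum (fun v n => n • v) = x := by
  classical
  induction hx using AddSubmonoid.closure_induction with
  | mem y hy =>
    refine ⟨Finsupp.single y 1, ?_, by simp⟩
    rw [Finsupp.support_single_ne_zero _ one_ne_zero]
    simpa using hy
  | zero => exact ⟨0, by simp, by simp⟩
  | add a b _ _ iha ihb =>
    obtain ⟨f, hfs, hf⟩ := iha
    obtain ⟨g, hgs, hg⟩ := ihb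
    refine ⟨f + g, ?_, ?_⟩
    · intro z hz
      rcases Finset.mem_union.mp (Finsupp.support_add hz) with h | h
      · exact hfs h
      · exact hgs h
    · rw [Finsupp.sum_add_index' (by simp) (fun v m n => by simp [add_smul]), hf, hg]

lemma NComb_inter {V : Type*} [AddCommGroup V] [Module ℝ V] {S : Set V}
    (hS : LinearIndependent ℝ (fun x : S => (x : V))) {x : V}
    (hx : x ∈ NComb S) (hx' : -x ∈ NComb S) : x = 0 := by
  classical
  obtain ⟨f, hfs, hf⟩ := mem_NComb_exists hx
  obtain ⟨g, hgs, hg⟩ := mem_NComb_exists hx'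
  have hsum : (f + g).sum (fun v n => n • v) = 0 := by
    rw [Finsupp.sum_add_index' (by simp) (fun v m n => by simp [add_smul]), hf, hg]
    simp
  set l : V →₀ ℝ := (f + g).mapRange (Nat.cast) (by simp) with hl
  have hli := linearIndepOn_iff.mp (linearIndependent_subtype_iff.mp hS)
  have hl0 : l = 0 := by
    refine hli l ?_ ?_
    · rw [Finsupp.mem_supported]
      intro z hz
      have hz' : z ∈ (f + g).support := Finsupp.support_mapRange hz
      rcases Finset.mem_union.mp (Finsupp.support_add hz') with h | h
      · exact hfs h
      · exact hgs h
    · rw [Finsupp.linearCombination_apply, hl, Finsupp.sum_mapRange_index (by simp)]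
      rw [← hsum]
      exact Finsupp.sum_congr fun v _ => by rw [id, Nat.cast_smul_eq_nsmul]
  have hfg : f + g = 0 := by
    ext v
    have hv : l v = 0 := by rw [hl0]; rfl
    simp only [hl, Finsupp.mapRange_apply, Nat.cast_eq_zero] at hv
    simpa using hv
  have hf0 : f = 0 := by
    ext v
    have := Finsupp.ext_iff.mp hfg v
    simp only [Finsupp.coe_add, Pi.add_apply, Finsupp.add_apply, Finsupp.coe_zero,
      Pi.zero_apply, Finsupp.zero_apply] at this ⊢
    omega
  rw [← hf, hf0]
  simp

/-- Reflecting `B` in a simple root `α` which is negative for `B'` decreases by exactly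
one the number of `B`-positive roots which are `B'`-negative. -/
theorem statement6 {V : Type*} [AddCommGroup V] [Module ℝ V]
    (Δ B B' : Set V) (hfin : Δ.Finite) (h0 : (0 : V) ∉ Δ)
    (hsym : Δ = -Δ) (hB : IsBase Δ B) (hB' : IsBase Δ B')
    (α : V) (hα : α ∈ B) (hneg : α ∈ -NComb B') :
    ((((Δ ∩ NComb B) \ {α}) ∪ {-α}) ∩ (-NComb B')).ncard + 1
      = ((Δ ∩ NComb B) ∩ (-NComb B')).ncard := by
  have hαΔ : α ∈ Δ := hB.1 hα
  have hαne : α ≠ 0 := fun h => h0 (h ▸ hαΔ)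
  have hnegα : -α ∈ NComb B' := Set.mem_neg.mp hneg
  have hαnot : α ∉ NComb B' := by
    intro hmem
    exact hαne (NComb_inter hB'.2.1 hmem hnegα)
  have hnegα' : -α ∉ -NComb B' := by
    rw [Set.mem_neg, neg_neg]; exact hαnot
  have hset : ((((Δ ∩ NComb B) \ {α}) ∪ {-α}) ∩ (-NComb B'))
      = ((Δ ∩ NComb B) ∩ (-NComb B')) \ {α} := by
    ext x
    simp only [Set.mem_inter_iff, Set.mem_union, Set.mem_diff, Set.mem_singleton_iff]
    constructor
    · rintro ⟨(⟨hx, hxα⟩ | rfl), hx'⟩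
      · exact ⟨⟨hx, hx'⟩, hxα⟩
      · exact absurd hx' hnegα'
    · rintro ⟨⟨hx, hx'⟩, hxα⟩
      exact ⟨Or.inl ⟨hx, hxα⟩, hx'⟩
  rw [hset]
  apply Set.ncard_diff_singleton_add_one
  · exact ⟨⟨hαΔ, AddSubmonoid.subset_closure hα⟩, hneg⟩
  · exact hfin.subset (Set.inter_subset_left.trans Set.inter_subset_left)
end

section
/- Let r, s ≥ 1, let Σ := {γ_1−γ_2, …, γ_{r−1}−γ_r, γ_r−ν_1, ν_1−ν_2, …, ν_{s−1}−ν_s, ν_s}, and let Π := {γ_1−γ_2, …, γ_{r−1}−γ_r, γ_r, ν_1−ν_2, …, ν_{s−1}−ν_s, ν_s}. Then Π is a base of the even part Δ_reg of BC(r,s), the induced positive systems agree, i.e. Δ_reg ∩ ℕΠ = Δ_reg ∩ ℕΣ, and Π \ Σ = {γ_r}; that is, Π is the set of principal roots determined by Σ, and γ_r is the unique principal root not lying in Σ. -/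
open Pointwise

/-- The `i`-th standard basis vector of `ℝⁿ` (indices are 0-based; junk value `0` out of range). -/
def bv (n i : ℕ) : Fin n → ℝ :=
  if h : i < n then Pi.single (⟨i, h⟩ : Fin n) 1 else 0

/-- The set `{1, -1}` of signs. -/
def pm : Set ℝ := {1, -1}

/-- The restricted root system `BC(r,s)` in `ℝ^(r+s)`, with `γ_i = bv (r+s) i` for
`0 ≤ i < r` (0-indexed) and `ν_j = bv (r+s) (r+j)` for `0 ≤ j < s`. -/
def BCset (r s : ℕ) : Set (Fin (r + s) → ℝ) :=
  {x | ∃ a ∈ pm, ∃ b ∈ pm, ∃ i j : ℕ, i < j ∧ j < r ∧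
      x = a • bv (r + s) i + b • bv (r + s) j} ∪
  {x | ∃ a ∈ pm, ∃ i : ℕ, i < r ∧
      (x = a • bv (r + s) i ∨ x = (2 * a) • bv (r + s) i)} ∪
  {x | ∃ a ∈ pm, ∃ b ∈ pm, ∃ i j : ℕ, i < j ∧ j < s ∧
      x = a • bv (r + s) (r + i) + b • bv (r + s) (r + j)} ∪
  {x | ∃ a ∈ pm, ∃ j : ℕ, j < s ∧
      (x = a • bv (r + s) (r + j) ∨ x = (2 * a) • bv (r + s) (r + j))} ∪
  {x | ∃ a ∈ pm, ∃ b ∈ pm, ∃ i j : ℕ, i < r ∧ j < s ∧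
      x = a • bv (r + s) i + b • bv (r + s) (r + j)}

/-- The standard base `Σ = {γ_1−γ_2, …, γ_{r−1}−γ_r, γ_r−ν_1, ν_1−ν_2, …, ν_{s−1}−ν_s, ν_s}`
of `BC(r,s)` (written with 0-based indices). -/
def BCbase (r s : ℕ) : Set (Fin (r + s) → ℝ) :=
  {x | ∃ i : ℕ, i + 1 < r ∧ x = bv (r + s) i - bv (r + s) (i + 1)} ∪
  {bv (r + s) (r - 1) - bv (r + s) r} ∪
  {x | ∃ j : ℕ, j + 1 < s ∧ x = bv (r + s) (r + j) - bv (r + s) (r + j + 1)} ∪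
  {bv (r + s) (r + s - 1)}
/-- The even (regular) part of `BC(r,s)`: the roots `±γ_i±γ_j`, `±γ_i`, `±2γ_i`,
`±ν_i±ν_j`, `±ν_j`, `±2ν_j`. -/
def BCreg (r s : ℕ) : Set (Fin (r + s) → ℝ) :=
  {x | ∃ a ∈ pm, ∃ b ∈ pm, ∃ i j : ℕ, i < j ∧ j < r ∧
      x = a • bv (r + s) i + b • bv (r + s) j} ∪
  {x | ∃ a ∈ pm, ∃ i : ℕ, i < r ∧
      (x = a • bv (r + s) i ∨ x = (2 * a) • bv (r + s) i)} ∪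
  {x | ∃ a ∈ pm, ∃ b ∈ pm, ∃ i j : ℕ, i < j ∧ j < s ∧
      x = a • bv (r + s) (r + i) + b • bv (r + s) (r + j)} ∪
  {x | ∃ a ∈ pm, ∃ j : ℕ, j < s ∧
      (x = a • bv (r + s) (r + j) ∨ x = (2 * a) • bv (r + s) (r + j))}

/-- The set `Π = {γ_1−γ_2, …, γ_{r−1}−γ_r, γ_r, ν_1−ν_2, …, ν_{s−1}−ν_s, ν_s}` of principal
roots (0-based indices). -/
def BCprin (r s : ℕ) : Set (Fin (r + s) → ℝ) :=
  {x | ∃ i : ℕ, i + 1 < r ∧ x = bv (r + s) i - bv (r + s) (i + 1)} ∪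
  {bv (r + s) (r - 1)} ∪
  {x | ∃ j : ℕ, j + 1 < s ∧ x = bv (r + s) (r + j) - bv (r + s) (r + j + 1)} ∪
  {bv (r + s) (r + s - 1)}
namespace Stmt10Aux

variable {r s : ℕ}

lemma mem_NComb {V : Type*} [AddCommMonoid V] {S : Set V} {x : V} (h : x ∈ S) :
    x ∈ NComb S := AddSubmonoid.subset_closure h

lemma NComb_add {V : Type*} [AddCommMonoid V] {S : Set V} {x y : V}
    (hx : x ∈ NComb S) (hy : y ∈ NComb S) : x + y ∈ NComb S :=
  AddSubmonoid.add_mem _ hx hy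

noncomputable def ff (r s : ℕ) (x : Fin (r + s) → ℝ) : ℝ :=
  ∑ k : Fin (r + s), ((r : ℝ) + s - (k : ℕ)) * x k

lemma ff_add (x y : Fin (r + s) → ℝ) : ff r s (x + y) = ff r s x + ff r s y := by
  simp [ff, mul_add, Finset.sum_add_distrib]

lemma ff_neg (x : Fin (r + s) → ℝ) : ff r s (-x) = -ff r s x := by
  simp [ff]

lemma ff_sub (x y : Fin (r + s) → ℝ) : ff r s (x - y) = ff r s x - ff r s y := by
  rw [sub_eq_add_neg, ff_add, ff_neg]; ring

lemma ff_bv {i : ℕ} (hi : i < r + s) : ff r s (bv (r + s) i) = (r : ℝ) + s - i := by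
  rw [ff, bv, dif_pos hi, Finset.sum_eq_single (⟨i, hi⟩ : Fin (r + s))]
  · simp
  · intro b _ hb
    rw [Pi.single_apply, if_neg hb, mul_zero]
  · simp

def nnFF (r s : ℕ) : AddSubmonoid (Fin (r + s) → ℝ) where
  carrier := {z | 0 ≤ ff r s z}
  zero_mem' := by simp [ff]
  add_mem' := by
    intro a b ha hb
    simp only [Set.mem_setOf_eq] at *
    rw [ff_add]; linarith

lemma ff_nonneg_NComb {B : Set (Fin (r + s) → ℝ)} (hB : ∀ y ∈ B, 0 ≤ ff r s y)
    {x : Fin (r + s) → ℝ} (hx : x ∈ NComb B) : 0 ≤ ff r s x := by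
  have h : AddSubmonoid.closure B ≤ nnFF r s :=
    AddSubmonoid.closure_le.mpr (fun y hy => hB y hy)
  exact h hx

end Stmt10Aux
namespace Stmt10Aux

variable {r s : ℕ}

/-- Generic downward chain lemma on an interval. -/
lemma chain_mem {B : Set (Fin (r + s) → ℝ)} {lo hi : ℕ}
    (h1 : ∀ k, lo ≤ k → k + 1 < hi → bv (r + s) k - bv (r + s) (k + 1) ∈ NComb B)
    (h2 : bv (r + s) (hi - 1) ∈ NComb B) :
    ∀ i, lo ≤ i → i < hi → bv (r + s) i ∈ NComb B := by
  have key : ∀ d i, lo ≤ i → i < hi → hi - i ≤ d → bv (r + s) i ∈ NComb B := by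
    intro d
    induction d with
    | zero => intro i _ h2' h3; omega
    | succ d ih =>
      intro i hi1 hi2 hi3
      rcases Nat.lt_or_ge (i + 1) hi with h | h
      · have hrec := ih (i + 1) (by omega) h (by omega)
        have heq : bv (r + s) i = (bv (r + s) i - bv (r + s) (i + 1)) + bv (r + s) (i + 1) := by
          abel
        rw [heq]
        exact NComb_add (h1 i hi1 h) hrec
      · have : i = hi - 1 := by omega
        rw [this]; exact h2
  exact fun i h h' => key (hi - i) i h h' le_rfl

/-- Generic telescoping difference lemma on an interval. -/
lemma diff_mem {B : Set (Fin (r + s) → ℝ)} {lo hi : ℕ}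
    (h1 : ∀ k, lo ≤ k → k + 1 < hi → bv (r + s) k - bv (r + s) (k + 1) ∈ NComb B) :
    ∀ i j, lo ≤ i → i < j → j < hi → bv (r + s) i - bv (r + s) j ∈ NComb B := by
  have key : ∀ d i j, lo ≤ i → i < j → j < hi → j - i ≤ d →
      bv (r + s) i - bv (r + s) j ∈ NComb B := by
    intro d
    induction d with
    | zero => intro i j _ h2 _ h4; omega
    | succ d ih =>
      intro i j hi1 hij hj hd
      rcases Nat.lt_or_ge (i + 1) j with h | h
      · have hrec := ih (i + 1) j (by omega) h hj (by omega)
        have heq : bv (r + s) i - bv (r + s) j =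
            (bv (r + s) i - bv (r + s) (i + 1)) + (bv (r + s) (i + 1) - bv (r + s) j) := by
          abel
        rw [heq]
        exact NComb_add (h1 i hi1 (by omega)) hrec
      · have : j = i + 1 := by omega
        subst this
        exact h1 i hi1 hj
  exact fun i j h h' h'' => key (j - i) i j h h' h'' le_rfl

-- membership of the components
lemma prin_gdiff {i : ℕ} (h : i + 1 < r) :
    bv (r + s) i - bv (r + s) (i + 1) ∈ BCprin r s :=
  Set.mem_union_left _ (Set.mem_union_left _ (Set.mem_union_left _ ⟨i, h, rfl⟩))

lemma prin_g : bv (r + s) (r - 1) ∈ BCprin r s :=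
  Set.mem_union_left _ (Set.mem_union_left _ (Set.mem_union_right _ rfl))

lemma prin_ndiff {j : ℕ} (h : j + 1 < s) :
    bv (r + s) (r + j) - bv (r + s) (r + j + 1) ∈ BCprin r s :=
  Set.mem_union_left _ (Set.mem_union_right _ ⟨j, h, rfl⟩)

lemma prin_n : bv (r + s) (r + s - 1) ∈ BCprin r s :=
  Set.mem_union_right _ rfl

lemma base_gdiff {i : ℕ} (h : i + 1 < r) :
    bv (r + s) i - bv (r + s) (i + 1) ∈ BCbase r s :=
  Set.mem_union_left _ (Set.mem_union_left _ (Set.mem_union_left _ ⟨i, h, rfl⟩))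

lemma base_cross : bv (r + s) (r - 1) - bv (r + s) r ∈ BCbase r s :=
  Set.mem_union_left _ (Set.mem_union_left _ (Set.mem_union_right _ rfl))

lemma base_ndiff {j : ℕ} (h : j + 1 < s) :
    bv (r + s) (r + j) - bv (r + s) (r + j + 1) ∈ BCbase r s :=
  Set.mem_union_left _ (Set.mem_union_right _ ⟨j, h, rfl⟩)

lemma base_n : bv (r + s) (r + s - 1) ∈ BCbase r s :=
  Set.mem_union_right _ rfl

-- ν-interval diffs as generic-interval diffs
lemma prin_ndiff' {k : ℕ} (hk : r ≤ k) (hk' : k + 1 < r + s) :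
    bv (r + s) k - bv (r + s) (k + 1) ∈ BCprin r s := by
  have h1 : r + (k - r) = k := by omega
  have := prin_ndiff (r := r) (s := s) (j := k - r) (by omega)
  rwa [h1] at this

lemma base_ndiff' {k : ℕ} (hk : r ≤ k) (hk' : k + 1 < r + s) :
    bv (r + s) k - bv (r + s) (k + 1) ∈ BCbase r s := by
  have h1 : r + (k - r) = k := by omega
  have := base_ndiff (r := r) (s := s) (j := k - r) (by omega)
  rwa [h1] at this

lemma e_mem_prin (hr : 1 ≤ r) (hs : 1 ≤ s) {i : ℕ} (hi : i < r + s) :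
    bv (r + s) i ∈ NComb (BCprin r s) := by
  rcases Nat.lt_or_ge i r with h | h
  · exact chain_mem (lo := 0) (hi := r)
      (fun k _ hk => mem_NComb (prin_gdiff hk)) (mem_NComb prin_g) i (Nat.zero_le _) h
  · exact chain_mem (lo := r) (hi := r + s)
      (fun k hk hk' => mem_NComb (prin_ndiff' hk hk')) (mem_NComb prin_n) i h hi

lemma e_mem_base (hr : 1 ≤ r) (hs : 1 ≤ s) {i : ℕ} (hi : i < r + s) :
    bv (r + s) i ∈ NComb (BCbase r s) := by
  have hnu : ∀ k, r ≤ k → k < r + s → bv (r + s) k ∈ NComb (BCbase r s) :=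
    chain_mem (lo := r) (hi := r + s)
      (fun k hk hk' => mem_NComb (base_ndiff' hk hk')) (mem_NComb base_n)
  rcases Nat.lt_or_ge i r with h | h
  · refine chain_mem (lo := 0) (hi := r)
      (fun k _ hk => mem_NComb (base_gdiff hk)) ?_ i (Nat.zero_le _) h
    have heq : bv (r + s) (r - 1) = (bv (r + s) (r - 1) - bv (r + s) r) + bv (r + s) r := by
      abel
    rw [heq]
    exact NComb_add (mem_NComb base_cross) (hnu r le_rfl (by omega))
  · exact hnu i h hi

lemma gdiff_mem_prin {i j : ℕ} (hij : i < j) (hj : j < r) :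
    bv (r + s) i - bv (r + s) j ∈ NComb (BCprin r s) :=
  diff_mem (lo := 0) (hi := r) (fun k _ hk => mem_NComb (prin_gdiff hk)) i j (Nat.zero_le _) hij hj

lemma gdiff_mem_base {i j : ℕ} (hij : i < j) (hj : j < r) :
    bv (r + s) i - bv (r + s) j ∈ NComb (BCbase r s) :=
  diff_mem (lo := 0) (hi := r) (fun k _ hk => mem_NComb (base_gdiff hk)) i j (Nat.zero_le _) hij hj

lemma ndiff_mem_prin {i j : ℕ} (hij : i < j) (hj : j < s) :
    bv (r + s) (r + i) - bv (r + s) (r + j) ∈ NComb (BCprin r s) :=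
  diff_mem (lo := r) (hi := r + s) (fun k hk hk' => mem_NComb (prin_ndiff' hk hk'))
    (r + i) (r + j) (Nat.le_add_right _ _) (by omega) (by omega)

lemma ndiff_mem_base {i j : ℕ} (hij : i < j) (hj : j < s) :
    bv (r + s) (r + i) - bv (r + s) (r + j) ∈ NComb (BCbase r s) :=
  diff_mem (lo := r) (hi := r + s) (fun k hk hk' => mem_NComb (base_ndiff' hk hk'))
    (r + i) (r + j) (Nat.le_add_right _ _) (by omega) (by omega)

end Stmt10Aux
namespace Stmt10Aux

variable {r s : ℕ}

/-- A "positive" vector: lies in both `ℕΠ` and `ℕΣ` and has positive `ff`. -/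
def Good (r s : ℕ) (y : Fin (r + s) → ℝ) : Prop :=
  y ∈ NComb (BCprin r s) ∧ y ∈ NComb (BCbase r s) ∧ 0 < ff r s y

lemma Good.add {y z : Fin (r + s) → ℝ} (hy : Good r s y) (hz : Good r s z) :
    Good r s (y + z) := by
  refine ⟨NComb_add hy.1 hz.1, NComb_add hy.2.1 hz.2.1, ?_⟩
  rw [ff_add]
  have := hy.2.2; have := hz.2.2; linarith

lemma good_e (hr : 1 ≤ r) (hs : 1 ≤ s) {i : ℕ} (hi : i < r + s) :
    Good r s (bv (r + s) i) := by
  refine ⟨e_mem_prin hr hs hi, e_mem_base hr hs hi, ?_⟩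
  rw [ff_bv hi]
  have : (i : ℝ) < (r : ℝ) + s := by exact_mod_cast hi
  linarith

lemma good_gdiff {i j : ℕ} (hij : i < j) (hj : j < r) :
    Good r s (bv (r + s) i - bv (r + s) j) := by
  have hi' : i < r + s := by omega
  have hj' : j < r + s := by omega
  refine ⟨gdiff_mem_prin hij hj, gdiff_mem_base hij hj, ?_⟩
  rw [ff_sub, ff_bv hi', ff_bv hj']
  have : (i : ℝ) < (j : ℝ) := by exact_mod_cast hij
  linarith

lemma good_ndiff {i j : ℕ} (hij : i < j) (hj : j < s) :
    Good r s (bv (r + s) (r + i) - bv (r + s) (r + j)) := by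
  have hi' : r + i < r + s := by omega
  have hj' : r + j < r + s := by omega
  refine ⟨ndiff_mem_prin hij hj, ndiff_mem_base hij hj, ?_⟩
  rw [ff_sub, ff_bv hi', ff_bv hj']
  have : ((r + i : ℕ) : ℝ) < ((r + j : ℕ) : ℝ) := by exact_mod_cast (by omega : r + i < r + j)
  linarith

lemma pm_cases {a : ℝ} (ha : a ∈ pm) : a = 1 ∨ a = -1 := by
  simpa [pm] using ha

/-- Every even root is `y` or `-y` for some good `y`. -/
lemma decomp (hr : 1 ≤ r) (hs : 1 ≤ s) {x : Fin (r + s) → ℝ} (hx : x ∈ BCreg r s) :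
    ∃ y, (x = y ∨ x = -y) ∧ Good r s y := by
  have pair : ∀ (u v : Fin (r + s) → ℝ) (a b : ℝ), a ∈ pm → b ∈ pm →
      Good r s (u + v) → Good r s (u - v) →
      ∃ y, (a • u + b • v = y ∨ a • u + b • v = -y) ∧ Good r s y := by
    intro u v a b ha hb hsum hdiff
    rcases pm_cases ha with rfl | rfl <;> rcases pm_cases hb with rfl | rfl
    · exact ⟨u + v, Or.inl (by module), hsum⟩
    · exact ⟨u - v, Or.inl (by module), hdiff⟩
    · exact ⟨u - v, Or.inr (by module), hdiff⟩
    · exact ⟨u + v, Or.inr (by module), hsum⟩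
  have single : ∀ (u : Fin (r + s) → ℝ) (a : ℝ), a ∈ pm → Good r s u →
      ∀ x', (x' = a • u ∨ x' = (2 * a) • u) →
      ∃ y, (x' = y ∨ x' = -y) ∧ Good r s y := by
    intro u a ha hu x' hx'
    rcases pm_cases ha with rfl | rfl <;> rcases hx' with rfl | rfl
    · exact ⟨u, Or.inl (by module), hu⟩
    · exact ⟨u + u, Or.inl (by module), hu.add hu⟩
    · exact ⟨u, Or.inr (by module), hu⟩
    · exact ⟨u + u, Or.inr (by module), hu.add hu⟩
  rcases hx with ((h | h) | h) | h
  · obtain ⟨a, ha, b, hb, i, j, hij, hj, rfl⟩ := h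
    exact pair _ _ a b ha hb
      ((good_e hr hs (by omega)).add (good_e hr hs (by omega))) (good_gdiff hij hj)
  · obtain ⟨a, ha, i, hi, hx'⟩ := h
    exact single _ a ha (good_e hr hs (by omega)) _ hx'
  · obtain ⟨a, ha, b, hb, i, j, hij, hj, rfl⟩ := h
    exact pair _ _ a b ha hb
      ((good_e hr hs (by omega)).add (good_e hr hs (by omega))) (good_ndiff hij hj)
  · obtain ⟨a, ha, j, hj, hx'⟩ := h
    exact single _ a ha (good_e hr hs (by omega)) _ hx'

end Stmt10Aux
namespace Stmt10Aux

variable {r s : ℕ}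

lemma ff_adj {k : ℕ} (hk : k + 1 < r + s) :
    ff r s (bv (r + s) k - bv (r + s) (k + 1)) = 1 := by
  rw [ff_sub, ff_bv (by omega), ff_bv hk]
  push_cast
  ring

lemma ff_nonneg_prin (hr : 1 ≤ r) (hs : 1 ≤ s) :
    ∀ y ∈ BCprin r s, 0 ≤ ff r s y := by
  intro y hy
  rcases hy with ((h | h) | h) | h
  · obtain ⟨i, hi, rfl⟩ := h
    rw [ff_adj (by omega)]; norm_num
  · rw [Set.mem_singleton_iff] at h; subst h
    rw [ff_bv (by omega)]
    have h1 : ((r - 1 : ℕ) : ℝ) ≤ r := by exact_mod_cast Nat.sub_le r 1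
    have h2 : (0 : ℝ) ≤ s := Nat.cast_nonneg s
    linarith
  · obtain ⟨j, hj, rfl⟩ := h
    rw [ff_adj (by omega)]; norm_num
  · rw [Set.mem_singleton_iff] at h; subst h
    rw [ff_bv (by omega)]
    have h1 : ((r + s - 1 : ℕ) : ℝ) ≤ (r : ℝ) + s := by
      exact_mod_cast Nat.sub_le (r + s) 1
    linarith

lemma ff_nonneg_base (hr : 1 ≤ r) (hs : 1 ≤ s) :
    ∀ y ∈ BCbase r s, 0 ≤ ff r s y := by
  intro y hy
  rcases hy with ((h | h) | h) | h
  · obtain ⟨i, hi, rfl⟩ := h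
    rw [ff_adj (by omega)]; norm_num
  · rw [Set.mem_singleton_iff] at h; subst h
    rw [ff_sub, ff_bv (by omega), ff_bv (by omega), Nat.cast_sub hr]
    push_cast
    linarith
  · obtain ⟨j, hj, rfl⟩ := h
    rw [ff_adj (by omega)]; norm_num
  · rw [Set.mem_singleton_iff] at h; subst h
    rw [ff_bv (by omega)]
    have h1 : ((r + s - 1 : ℕ) : ℝ) ≤ (r : ℝ) + s := by
      exact_mod_cast Nat.sub_le (r + s) 1
    linarith

end Stmt10Aux
namespace Stmt10Aux

variable {r s : ℕ}

def uu (r s : ℕ) (k : Fin (r + s)) : Fin (r + s) → ℝ :=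
  if (k : ℕ) + 1 = r ∨ (k : ℕ) + 1 = r + s then bv (r + s) (k : ℕ)
  else bv (r + s) (k : ℕ) - bv (r + s) ((k : ℕ) + 1)

lemma range_uu (hr : 1 ≤ r) (hs : 1 ≤ s) : Set.range (uu r s) = BCprin r s := by
  ext x
  constructor
  · rintro ⟨k, rfl⟩
    unfold uu
    split_ifs with h
    · rcases h with h | h
      · have hk : (k : ℕ) = r - 1 := by omega
        rw [hk]; exact prin_g
      · have hk : (k : ℕ) = r + s - 1 := by omega
        rw [hk]; exact prin_n
    · push_neg at h
      have hk : (k : ℕ) + 1 < r + s := by have := k.isLt; omega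
      rcases Nat.lt_or_ge ((k : ℕ) + 1) r with hlt | hge
      · exact prin_gdiff hlt
      · exact prin_ndiff' (by omega) hk
  · intro hx
    rcases hx with ((h | h) | h) | h
    · obtain ⟨i, hi, rfl⟩ := h
      refine ⟨⟨i, by omega⟩, ?_⟩
      unfold uu
      rw [if_neg (by simp only [Fin.val_mk]; omega)]
    · rw [Set.mem_singleton_iff] at h; subst h
      refine ⟨⟨r - 1, by omega⟩, ?_⟩
      unfold uu
      rw [if_pos (by simp only [Fin.val_mk]; omega)]
    · obtain ⟨j, hj, rfl⟩ := h
      refine ⟨⟨r + j, by omega⟩, ?_⟩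
      unfold uu
      rw [if_neg (by simp only [Fin.val_mk]; omega)]
    · rw [Set.mem_singleton_iff] at h; subst h
      refine ⟨⟨r + s - 1, by omega⟩, ?_⟩
      unfold uu
      rw [if_pos (by simp only [Fin.val_mk]; omega)]

lemma NComb_subset_span {S : Set (Fin (r + s) → ℝ)} :
    NComb S ⊆ (Submodule.span ℝ S : Set (Fin (r + s) → ℝ)) := by
  intro x hx
  have h : AddSubmonoid.closure S ≤ (Submodule.span ℝ S).toAddSubmonoid :=
    AddSubmonoid.closure_le.mpr Submodule.subset_span
  exact h hx

lemma li_prin (hr : 1 ≤ r) (hs : 1 ≤ s) :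
    LinearIndependent ℝ (fun x : BCprin r s => (x : Fin (r + s) → ℝ)) := by
  have hspan : ⊤ ≤ Submodule.span ℝ (Set.range (uu r s)) := by
    rw [range_uu hr hs, ← (Pi.basisFun ℝ (Fin (r + s))).span_eq]
    refine Submodule.span_le.mpr ?_
    rintro _ ⟨m, rfl⟩
    have hb : (Pi.basisFun ℝ (Fin (r + s))) m = bv (r + s) (m : ℕ) := by
      rw [Pi.basisFun_apply, bv, dif_pos m.isLt]
    rw [hb]
    exact NComb_subset_span (e_mem_prin hr hs m.isLt)
  have hcard : Fintype.card (Fin (r + s)) = Module.finrank ℝ (Fin (r + s) → ℝ) := by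
    simp [Module.finrank_fin_fun]
  have hli := linearIndependent_of_top_le_span_of_card_eq_finrank hspan hcard
  have h2 := hli.linearIndepOn_id.linearIndependent
  rwa [range_uu hr hs] at h2

end Stmt10Aux
namespace Stmt10Aux

variable {r s : ℕ}

lemma bv_apply {i : ℕ} (hi : i < r + s) (k : Fin (r + s)) :
    bv (r + s) i k = if (k : ℕ) = i then 1 else 0 := by
  rw [bv, dif_pos hi]
  simp [Pi.single_apply, Fin.ext_iff]

lemma g_not_base (hr : 1 ≤ r) (hs : 1 ≤ s) : bv (r + s) (r - 1) ∉ BCbase r s := by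
  intro h
  rcases h with ((h | h) | h) | h
  · obtain ⟨i, hi, heq⟩ := h
    have h2 := congrFun heq ⟨i + 1, by omega⟩
    rw [Pi.sub_apply, bv_apply (by omega), bv_apply (by omega), bv_apply (by omega)] at h2
    simp only [Fin.val_mk] at h2
    split_ifs at h2 <;> norm_num at h2 <;> omega
  · rw [Set.mem_singleton_iff] at h
    have h2 := congrFun h ⟨r, by omega⟩
    rw [Pi.sub_apply, bv_apply (by omega), bv_apply (by omega)] at h2
    simp only [Fin.val_mk] at h2
    split_ifs at h2 <;> norm_num at h2 <;> omega
  · obtain ⟨j, hj, heq⟩ := h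
    have h2 := congrFun heq ⟨r + j + 1, by omega⟩
    rw [Pi.sub_apply, bv_apply (by omega), bv_apply (by omega), bv_apply (by omega)] at h2
    simp only [Fin.val_mk] at h2
    split_ifs at h2 <;> norm_num at h2 <;> omega
  · rw [Set.mem_singleton_iff] at h
    have h2 := congrFun h ⟨r - 1, by omega⟩
    rw [bv_apply (by omega), bv_apply (by omega)] at h2
    simp only [Fin.val_mk] at h2
    split_ifs at h2 <;> norm_num at h2 <;> omega

lemma part3 (hr : 1 ≤ r) (hs : 1 ≤ s) :
    BCprin r s \ BCbase r s = {bv (r + s) (r - 1)} := by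
  ext x
  simp only [Set.mem_diff, Set.mem_singleton_iff]
  constructor
  · rintro ⟨hp, hb⟩
    rcases hp with ((h | h) | h) | h
    · obtain ⟨i, hi, rfl⟩ := h
      exact absurd (base_gdiff hi) hb
    · exact h
    · obtain ⟨j, hj, rfl⟩ := h
      exact absurd (base_ndiff hj) hb
    · rw [Set.mem_singleton_iff] at h; subst h
      exact absurd base_n hb
  · rintro rfl
    exact ⟨prin_g, g_not_base hr hs⟩

lemma pm_one : (1 : ℝ) ∈ pm := Or.inl rfl
lemma pm_negone : (-1 : ℝ) ∈ pm := Or.inr rfl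

lemma prin_subset_reg (hr : 1 ≤ r) (hs : 1 ≤ s) : BCprin r s ⊆ BCreg r s := by
  intro x hx
  rcases hx with ((h | h) | h) | h
  · obtain ⟨i, hi, rfl⟩ := h
    exact Set.mem_union_left _ (Set.mem_union_left _ (Set.mem_union_left _
      ⟨1, pm_one, -1, pm_negone, i, i + 1, by omega, hi, by module⟩))
  · rw [Set.mem_singleton_iff] at h; subst h
    exact Set.mem_union_left _ (Set.mem_union_left _ (Set.mem_union_right _
      ⟨1, pm_one, r - 1, by omega, Or.inl (by module)⟩))
  · obtain ⟨j, hj, rfl⟩ := h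
    refine Set.mem_union_left _ (Set.mem_union_right _
      ⟨1, pm_one, -1, pm_negone, j, j + 1, by omega, hj, ?_⟩)
    rw [show r + (j + 1) = r + j + 1 from by omega]
    module
  · rw [Set.mem_singleton_iff] at h; subst h
    refine Set.mem_union_right _ ⟨1, pm_one, s - 1, by omega, Or.inl ?_⟩
    rw [show r + (s - 1) = r + s - 1 from by omega]
    module

end Stmt10Aux

open Stmt10Aux in
/-- `Π` is a base of the even part of `BC(r,s)`, it induces the same positive system on the
even part as `Σ` does, and `γ_r` is the unique principal root not lying in `Σ`. -/
theorem statement10 (r s : ℕ) (hr : 1 ≤ r) (hs : 1 ≤ s) :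
    IsBase (BCreg r s) (BCprin r s) ∧
    BCreg r s ∩ NComb (BCprin r s) = BCreg r s ∩ NComb (BCbase r s) ∧
    BCprin r s \ BCbase r s = {bv (r + s) (r - 1)} := by
  refine ⟨⟨prin_subset_reg hr hs, li_prin hr hs, ?_⟩, ?_, part3 hr hs⟩
  · intro x hx
    obtain ⟨y, hy | hy, hg⟩ := decomp hr hs hx
    · exact Or.inl (hy ▸ hg.1)
    · refine Or.inr ?_
      rw [Set.mem_neg, hy, neg_neg]
      exact hg.1
  · apply Set.Subset.antisymm
    · rintro x ⟨hreg, hmem⟩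
      obtain ⟨y, hy | hy, hg⟩ := decomp hr hs hreg
      · exact ⟨hreg, hy ▸ hg.2.1⟩
      · exfalso
        have h1 : 0 ≤ ff r s x := ff_nonneg_NComb (ff_nonneg_prin hr hs) hmem
        rw [hy, ff_neg] at h1
        linarith [hg.2.2]
    · rintro x ⟨hreg, hmem⟩
      obtain ⟨y, hy | hy, hg⟩ := decomp hr hs hreg
      · exact ⟨hreg, hy ▸ hg.1⟩
      · exfalso
        have h1 : 0 ≤ ff r s x := ff_nonneg_NComb (ff_nonneg_base hr hs) hmem
        rw [hy, ff_neg] at h1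
        linarith [hg.2.2]
end
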